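/- Let G be an unweighted simple graph on n vertices and let C_1, C_2, …, C_q be cycles of G. For each i, let V_i denote the vertex set of C_i, and let E_i^{new} denote the set of edges of C_i having at least one endpoint not contained in V_1 ∪ … ∪ V_{i−1}. Then |E_1^{new} ∪ E_2^{new} ∪ … ∪ E_q^{new}| ≤ 2n. -/

import Mathlib

open SimpleGraph

private lemma countP_or_le {α : Type*} (l : List α) (p q : α → Bool) :
    l.countP (fun a => p a || q a) ≤ l.countP p + l.countP q := by
  induction l with
  | nil => simp
  | cons a l ih =>
    simp only [List.countP_cons]
    cases hp : p a <;> cases hq : q a <;> simp [hp, hq] <;> omega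

private lemma count_dropLast_le {V : Type*} [DecidableEq V] {G : SimpleGraph V} {a : V}
    {p : G.Walk a a} (h : p.IsCycle) (x : V) : p.support.dropLast.count x ≤ 1 := by
  classical
  obtain ⟨tl, htl⟩ : ∃ tl, p.support = a :: tl := ⟨p.support.tail, by
    rw [← p.support_eq_cons]⟩
  have hsuppne : p.support ≠ [] := p.support_ne_nil
  have htlne : tl ≠ [] := by
    intro hnil
    have hlen := p.length_support
    rw [htl, hnil] at hlen
    simp only [List.length_cons, List.length_nil] at hlen
    exact h.not_nil (SimpleGraph.Walk.nil_iff_length_eq.mpr (by omega))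
  have hnodup : tl.Nodup := by
    have := h.support_nodup
    rwa [htl] at this
  have h1 : (a :: tl).getLast? = some a := by
    rw [← htl, List.getLast?_eq_getLast hsuppne, p.getLast_support]
  have hlast : tl.getLast htlne = a := by
    obtain ⟨y, ys, rfl⟩ := List.exists_cons_of_ne_nil htlne
    rw [List.getLast?_cons_cons, List.getLast?_eq_getLast (l := y :: ys) (by simp)] at h1
    exact Option.some_injective _ h1
  have htl' : tl = tl.dropLast ++ [a] := by
    conv_lhs => rw [← List.dropLast_append_getLast htlne]
    rw [hlast]
  have hanotin : a ∉ tl.dropLast := by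
    intro hmem
    rw [htl'] at hnodup
    exact (List.disjoint_of_nodup_append hnodup) hmem (List.mem_singleton_self a)
  rw [htl, List.dropLast_cons_of_ne_nil htlne]
  rcases eq_or_ne x a with rfl | hxa
  · simp [List.count_cons, List.count_eq_zero_of_not_mem hanotin]
  · rw [List.count_cons_of_ne hxa.symm]
    calc tl.dropLast.count x ≤ tl.count x := (List.dropLast_sublist tl).count_le x
    _ ≤ 1 := List.nodup_iff_count_le_one.mp hnodup x

/-- In a cycle, at most two edges contain any given vertex. -/
private lemma cycle_two_edges {V : Type*} {G : SimpleGraph V} {a : V}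
    {p : G.Walk a a} (h : p.IsCycle) (x : V) :
    {f : Sym2 V | f ∈ p.edges ∧ x ∈ f}.ncard ≤ 2 := by
  classical
  have hset : {f : Sym2 V | f ∈ p.edges ∧ x ∈ f}
      = ↑((p.edges.filter (fun e => decide (x ∈ e))).toFinset) := by
    ext f
    simp [List.mem_filter]
  rw [hset, Set.ncard_coe_finset]
  calc (p.edges.filter (fun e => decide (x ∈ e))).toFinset.card
      ≤ (p.edges.filter (fun e => decide (x ∈ e))).length := List.toFinset_card_le _
    _ = p.edges.countP (fun e => decide (x ∈ e)) := List.countP_eq_length_filter.symm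
    _ ≤ 2 := by
        rw [SimpleGraph.Walk.edges, List.countP_map]
        have hfun : ((fun e => decide (x ∈ e)) ∘ SimpleGraph.Dart.edge : G.Dart → Bool)
            = fun d => ((d.toProd.1 == x) || (d.toProd.2 == x)) := by
          funext d
          have hiff : (x ∈ d.edge) ↔ (d.toProd.1 = x ∨ d.toProd.2 = x) := by
            rw [SimpleGraph.Dart.edge, Sym2.mem_iff]
            constructor
            · rintro (rfl | rfl)
              · exact Or.inl rfl
              · exact Or.inr rfl
            · rintro (rfl | rfl)
              · exact Or.inl rfl
              · exact Or.inr rfl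
          simp only [Function.comp_apply, hiff, Bool.decide_or, beq_iff_eq]
          rw [Bool.beq_eq_decide_eq, Bool.beq_eq_decide_eq]
        rw [hfun]
        calc p.darts.countP (fun d => ((d.toProd.1 == x) || (d.toProd.2 == x)))
            ≤ p.darts.countP (fun d => (d.toProd.1 == x))
              + p.darts.countP (fun d => (d.toProd.2 == x)) := countP_or_le _ _ _
          _ = (p.darts.map (fun d : G.Dart => d.toProd.1)).count x
              + (p.darts.map (fun d : G.Dart => d.toProd.2)).count x := by
              rw [List.count_eq_countP, List.count_eq_countP, List.countP_map, List.countP_map]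
              rfl
          _ = p.support.dropLast.count x + p.support.tail.count x := by
              rw [p.map_fst_darts, p.map_snd_darts]
          _ ≤ 1 + 1 := by
              gcongr
              · exact count_dropLast_le h x
              · exact List.nodup_iff_count_le_one.mp h.support_nodup x
          _ = 2 := rfl

/-- Let `C_1, …, C_q` be cycles of a graph `G` on `n` vertices, and for
each `i` let `E_i^new` be the set of edges of `C_i` with at least one endpoint not in
`V_1 ∪ … ∪ V_{i−1}` (the union of the vertex sets of the previous cycles). Then
`|E_1^new ∪ … ∪ E_q^new| ≤ 2n`. -/
theorem stmt_10 {V : Type*} [Fintype V] (G : SimpleGraph V) (q : ℕ)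
    (a : Fin q → V) (C : ∀ i : Fin q, G.Walk (a i) (a i))
    (hC : ∀ i : Fin q, (C i).IsCycle) :
    ({f : Sym2 V | ∃ i : Fin q, f ∈ (C i).edges ∧
        ∃ x ∈ f, ∀ j : Fin q, j < i → x ∉ (C j).support}).ncard ≤
      2 * Fintype.card V := by
  classical
  set S : Set (Sym2 V) := {f : Sym2 V | ∃ i : Fin q, f ∈ (C i).edges ∧
      ∃ x ∈ f, ∀ j : Fin q, j < i → x ∉ (C j).support} with hS
  set F : V → Set (Sym2 V) := fun x => {f : Sym2 V | ∃ i : Fin q, f ∈ (C i).edges ∧ x ∈ f ∧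
      ∀ j : Fin q, j < i → x ∉ (C j).support} with hF
  -- each F x has at most 2 elements
  have hF2 : ∀ x : V, (F x).ncard ≤ 2 := by
    intro x
    rcases Set.eq_empty_or_nonempty (F x) with he | ⟨f₀, i₀, hfi₀, hxf₀, hmin₀⟩
    · simp [he]
    · have hsub : F x ⊆ {f : Sym2 V | f ∈ (C i₀).edges ∧ x ∈ f} := by
        rintro f ⟨i, hfi, hxf, hmin⟩
        have hxsupp : ∀ k : Fin q, ∀ g : Sym2 V, g ∈ (C k).edges → x ∈ g →
            x ∈ (C k).support := by
          intro k g hg hxg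
          induction g with
          | h y z =>
            rcases Sym2.mem_iff.mp hxg with rfl | rfl
            · exact (C k).fst_mem_support_of_mem_edges hg
            · exact (C k).snd_mem_support_of_mem_edges hg
        have hii : i = i₀ := by
          by_contra hne
          rcases lt_or_gt_of_ne hne with hlt | hgt
          · exact hmin₀ i hlt (hxsupp i f hfi hxf)
          · exact hmin i₀ hgt (hxsupp i₀ f₀ hfi₀ hxf₀)
        subst hii
        exact ⟨hfi, hxf⟩
      calc (F x).ncard ≤ {f : Sym2 V | f ∈ (C i₀).edges ∧ x ∈ f}.ncard :=
            Set.ncard_le_ncard hsub (Set.toFinite _)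
        _ ≤ 2 := cycle_two_edges (hC i₀) x
  -- S is covered by the union of the F x
  have hcover : S ⊆ ⋃ x : V, F x := by
    rintro f ⟨i, hfi, x, hxf, hmin⟩
    exact Set.mem_iUnion.mpr ⟨x, i, hfi, hxf, hmin⟩
  calc S.ncard ≤ (⋃ x : V, F x).ncard := Set.ncard_le_ncard hcover (Set.toFinite _)
    _ ≤ ∑ x : V, (F x).ncard := by
        rw [Set.ncard_eq_toFinset_card _ (Set.toFinite _)]
        have hsub : (Set.toFinite (⋃ x : V, F x)).toFinset ⊆
            Finset.univ.biUnion (fun x : V => (Set.toFinite (F x)).toFinset) := by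
          intro f hf
          rw [Set.Finite.mem_toFinset, Set.mem_iUnion] at hf
          obtain ⟨x, hx⟩ := hf
          exact Finset.mem_biUnion.mpr ⟨x, Finset.mem_univ x,
            (Set.Finite.mem_toFinset _).mpr hx⟩
        calc (Set.toFinite (⋃ x : V, F x)).toFinset.card
            ≤ (Finset.univ.biUnion (fun x : V => (Set.toFinite (F x)).toFinset)).card :=
              Finset.card_le_card hsub
          _ ≤ ∑ x : V, (Set.toFinite (F x)).toFinset.card := Finset.card_biUnion_le
          _ = ∑ x : V, (F x).ncard := by
              refine Finset.sum_congr rfl fun x _ => ?_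
              rw [Set.ncard_eq_toFinset_card _ (Set.toFinite _)]
    _ ≤ ∑ _x : V, 2 := Finset.sum_le_sum (fun x _ => hF2 x)
    _ = 2 * Fintype.card V := by simp [Finset.card_univ, mul_comm]
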